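/- Let P(z) = (2/27)(z²+3)³(z²−1) + 1. Every point of the real interval [−1,1] has bounded forward orbit under iteration of P; consequently [−1,1] is contained in the filled Julia set K_P = {z ∈ ℂ : (P^n(z))_{n≥0} is bounded}. -/

import Mathlib

/-- The polynomial `P(z) = (2/27)(z²+3)³(z²−1) + 1`. -/
noncomputable def Ppoly (z : ℂ) : ℂ := (2 / 27) * (z ^ 2 + 3) ^ 3 * (z ^ 2 - 1) + 1

/-- Real version of `Ppoly`. -/
noncomputable def Preal (x : ℝ) : ℝ := (2 / 27) * (x ^ 2 + 3) ^ 3 * (x ^ 2 - 1) + 1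

lemma Ppoly_real (x : ℝ) : Ppoly (x : ℂ) = (Preal x : ℂ) := by
  simp [Ppoly, Preal]

lemma Preal_maps (x : ℝ) (hx : x ∈ Set.Icc (-1 : ℝ) 1) :
    Preal x ∈ Set.Icc (-1 : ℝ) 1 := by
  obtain ⟨h1, h2⟩ := hx
  have ht0 : (0 : ℝ) ≤ x ^ 2 := sq_nonneg x
  have ht1 : x ^ 2 ≤ 1 := by nlinarith
  constructor
  · unfold Preal; nlinarith [sq_nonneg (x^2), sq_nonneg (x^2*x)]
  · unfold Preal; nlinarith [pow_le_one₀ ht0 ht1 (n := 3), sq_nonneg (x^2+3)]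

lemma iter_real (x : ℝ) (n : ℕ) :
    Ppoly^[n] (x : ℂ) = ((Preal^[n] x : ℝ) : ℂ) := by
  induction n with
  | zero => simp
  | succ n ih => rw [Function.iterate_succ_apply', ih, Ppoly_real,
      Function.iterate_succ_apply']

/-- Every point of the real interval `[-1,1]` has bounded forward orbit under `P`;
consequently `[-1,1]` is contained in the filled Julia set
`K_P = {z : (Pⁿ(z))ₙ is bounded}`. -/
theorem interval_subset_filled_julia_set :
    ∀ x : ℝ, x ∈ Set.Icc (-1 : ℝ) 1 →
      (∃ M : ℝ, ∀ n : ℕ, ‖Ppoly^[n] (x : ℂ)‖ ≤ M) ∧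
      (x : ℂ) ∈ {z : ℂ | ∃ M : ℝ, ∀ n : ℕ, ‖Ppoly^[n] z‖ ≤ M} := by
  intro x hx
  have key : ∀ n : ℕ, Preal^[n] x ∈ Set.Icc (-1 : ℝ) 1 := by
    intro n
    induction n with
    | zero => simpa
    | succ n ih => rw [Function.iterate_succ_apply']; exact Preal_maps _ ih
  have hb : ∀ n : ℕ, ‖Ppoly^[n] (x : ℂ)‖ ≤ 1 := by
    intro n
    rw [iter_real, Complex.norm_real, Real.norm_eq_abs]
    exact abs_le.2 ⟨(key n).1, (key n).2⟩
  exact ⟨⟨1, hb⟩, ⟨1, hb⟩⟩
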